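/- The Yang--Baxter equation holds for the stochastic six vertex weights: for any fixed $i_1,i_2,i_3,j_1,j_2,j_3 \in \{0,1\}$ and $q,u,v \in (0,1)$, $\sum_{k_1,k_2,k_3 \in \{0,1\}} X_{u,v}(i_2,i_1;k_2,k_1)\, w_u(i_3,k_1;k_3,j_1)\, w_v(k_3,k_2;j_3,j_2) = \sum_{k_1',k_2',k_3' \in \{0,1\}} w_v(i_3,i_2;k_3',k_2')\, w_u(k_3',i_1;j_3,k_1')\, X_{u,v}(k_2',k_1';j_2,j_1)$, where $X_{u,v}(i,j;k,l) := w_{u/v}(i,j;k,l)$. -/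

import Mathlib

set_option maxHeartbeats 2000000


/-- Stochastic six vertex weights `w_u(i₁,j₁;i₂,j₂)`. -/
noncomputable def sixVertexW (q u : ℝ) : ℕ → ℕ → ℕ → ℕ → ℝ
  | 0, 0, 0, 0 => 1
  | 1, 1, 1, 1 => 1
  | 1, 0, 1, 0 => q * (1 - u) / (1 - q * u)
  | 0, 1, 0, 1 => (1 - u) / (1 - q * u)
  | 1, 0, 0, 1 => (1 - q) / (1 - q * u)
  | 0, 1, 1, 0 => u * (1 - q) / (1 - q * u)
  | _, _, _, _ => 0

@[simp] lemma sixVertexW_0000 (q u : ℝ) : sixVertexW q u 0 0 0 0 = 1 := rfl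
@[simp] lemma sixVertexW_0001 (q u : ℝ) : sixVertexW q u 0 0 0 1 = 0 := rfl
@[simp] lemma sixVertexW_0010 (q u : ℝ) : sixVertexW q u 0 0 1 0 = 0 := rfl
@[simp] lemma sixVertexW_0011 (q u : ℝ) : sixVertexW q u 0 0 1 1 = 0 := rfl
@[simp] lemma sixVertexW_0100 (q u : ℝ) : sixVertexW q u 0 1 0 0 = 0 := rfl
@[simp] lemma sixVertexW_0101 (q u : ℝ) : sixVertexW q u 0 1 0 1 = (1-u)/(1-q*u) := rfl
@[simp] lemma sixVertexW_0110 (q u : ℝ) : sixVertexW q u 0 1 1 0 = u*(1-q)/(1-q*u) := rfl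
@[simp] lemma sixVertexW_0111 (q u : ℝ) : sixVertexW q u 0 1 1 1 = 0 := rfl
@[simp] lemma sixVertexW_1000 (q u : ℝ) : sixVertexW q u 1 0 0 0 = 0 := rfl
@[simp] lemma sixVertexW_1001 (q u : ℝ) : sixVertexW q u 1 0 0 1 = (1-q)/(1-q*u) := rfl
@[simp] lemma sixVertexW_1010 (q u : ℝ) : sixVertexW q u 1 0 1 0 = q*(1-u)/(1-q*u) := rfl
@[simp] lemma sixVertexW_1011 (q u : ℝ) : sixVertexW q u 1 0 1 1 = 0 := rfl
@[simp] lemma sixVertexW_1100 (q u : ℝ) : sixVertexW q u 1 1 0 0 = 0 := rfl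
@[simp] lemma sixVertexW_1101 (q u : ℝ) : sixVertexW q u 1 1 0 1 = 0 := rfl
@[simp] lemma sixVertexW_1110 (q u : ℝ) : sixVertexW q u 1 1 1 0 = 0 := rfl
@[simp] lemma sixVertexW_1111 (q u : ℝ) : sixVertexW q u 1 1 1 1 = 1 := rfl

/-- The cross vertex weight `X_{u,v} = w_{u/v}`. -/
noncomputable def sixVertexX (q u v : ℝ) : ℕ → ℕ → ℕ → ℕ → ℝ :=
  sixVertexW q (u / v)

/-- The Yang--Baxter equation for the stochastic six vertex weights. -/
theorem yang_baxter (q u v : ℝ) (hq : q ∈ Set.Ioo (0:ℝ) 1) (hu : u ∈ Set.Ioo (0:ℝ) 1)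
    (hv : v ∈ Set.Ioo (0:ℝ) 1) (huv : u < v)
    (i₁ i₂ i₃ j₁ j₂ j₃ : ℕ) (hi₁ : i₁ ≤ 1) (hi₂ : i₂ ≤ 1) (hi₃ : i₃ ≤ 1)
    (hj₁ : j₁ ≤ 1) (hj₂ : j₂ ≤ 1) (hj₃ : j₃ ≤ 1) :
    ∑ k₁ ∈ Finset.range 2, ∑ k₂ ∈ Finset.range 2, ∑ k₃ ∈ Finset.range 2,
      sixVertexX q u v i₂ i₁ k₂ k₁ * sixVertexW q u i₃ k₁ k₃ j₁ *
        sixVertexW q v k₃ k₂ j₃ j₂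
    = ∑ k₁' ∈ Finset.range 2, ∑ k₂' ∈ Finset.range 2, ∑ k₃' ∈ Finset.range 2,
      sixVertexW q v i₃ i₂ k₃' k₂' * sixVertexW q u k₃' i₁ j₃ k₁' *
        sixVertexX q u v k₂' k₁' j₂ j₁ := by
  obtain ⟨hq0, hq1⟩ := hq
  obtain ⟨hu0, hu1⟩ := hu
  obtain ⟨hv0, hv1⟩ := hv
  have hv0' : v ≠ 0 := ne_of_gt hv0
  have hqu : (1 : ℝ) - q * u ≠ 0 := by nlinarith
  have hqv : (1 : ℝ) - q * v ≠ 0 := by nlinarith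
  have hvqu : v - q * u ≠ 0 := by nlinarith
  have hquv : (1 : ℝ) - q * (u / v) ≠ 0 := by
    intro h
    apply hvqu
    field_simp at h
    linarith
  have e1 : sixVertexW q (u / v) 1 0 1 0 = q * (v - u) / (v - q * u) := by
    rw [sixVertexW_1010]; field_simp
  have e2 : sixVertexW q (u / v) 0 1 0 1 = (v - u) / (v - q * u) := by
    rw [sixVertexW_0101]; field_simp
  have e3 : sixVertexW q (u / v) 1 0 0 1 = v * (1 - q) / (v - q * u) := by
    rw [sixVertexW_1001]; field_simp
  have e4 : sixVertexW q (u / v) 0 1 1 0 = u * (1 - q) / (v - q * u) := by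
    rw [sixVertexW_0110]; field_simp
  have hqu' : (1 : ℝ) - u * q ≠ 0 := by rw [mul_comm]; exact hqu
  have hqv' : (1 : ℝ) - v * q ≠ 0 := by rw [mul_comm]; exact hqv
  have hvqu' : v - u * q ≠ 0 := by rw [mul_comm]; exact hvqu
  interval_cases i₁ <;> interval_cases i₂ <;> interval_cases i₃ <;>
    interval_cases j₁ <;> interval_cases j₂ <;> interval_cases j₃ <;>
    simp only [Finset.sum_range_succ, Finset.sum_range_zero, sixVertexX, e1, e2, e3, e4,
      sixVertexW_0000, sixVertexW_0001, sixVertexW_0010, sixVertexW_0011, sixVertexW_0100,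
      sixVertexW_0101, sixVertexW_0110, sixVertexW_0111, sixVertexW_1000, sixVertexW_1001,
      sixVertexW_1010, sixVertexW_1011, sixVertexW_1100, sixVertexW_1101, sixVertexW_1110,
      sixVertexW_1111, mul_zero, zero_mul, add_zero, zero_add, mul_one, one_mul] <;>
    field_simp <;> ring
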